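/- Let T = Spec k[M] be a split torus over a field k carrying the trivial absolute value, with character lattice M and cocharacter lattice N. For each ℝ-linear functional a : M → ℝ, the formula |Σ_{m ∈ M} c_m χ^m| = max_{m} |c_m|₀ · e^{−⟨m,a⟩} (where |·|₀ is the trivial absolute value on k) defines a multiplicative seminorm on k[M]. The resulting map emb : N_ℝ → T^an is a continuous section of the tropicalization map trop : T^an → N_ℝ, i.e. trop ∘ emb = id on N_ℝ. -/

import Mathlib

open scoped Classical

def IsMultSeminorm {A : Type*} [CommRing A] (f : A → ℝ) : Prop :=
  f 0 = 0 ∧ f 1 = 1 ∧ (∀ x y, f (x * y) = f x * f y) ∧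
    (∀ x y, f (x + y) ≤ f x + f y) ∧ ∀ x, 0 ≤ f x

namespace Stmt8Aux

noncomputable def Wf {n : ℕ} (w : Fin n → ℝ) (m : Fin n → ℤ) : ℝ := ∑ i, (m i : ℝ) * w i

lemma Wf_add {n : ℕ} (w : Fin n → ℝ) (a b : Fin n → ℤ) :
    Wf w (a + b) = Wf w a + Wf w b := by
  simp [Wf, add_mul, Finset.sum_add_distrib]

lemma Wf_zero {n : ℕ} (w : Fin n → ℝ) : Wf w 0 = 0 := by simp [Wf]

/-- Value of a biSup over a finset at a maximizing element. -/
lemma bsup_eq {α : Type*} {s : Finset α} {f : α → ℝ} (hf : ∀ a, 0 ≤ f a)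
    {m₀ : α} (hm₀ : m₀ ∈ s) (hmax : ∀ m ∈ s, f m ≤ f m₀) :
    (⨆ m ∈ s, f m) = f m₀ := by
  apply le_antisymm
  · exact Real.iSup_le (fun m => Real.iSup_le (fun hm => hmax m hm) (hf m₀)) (hf m₀)
  · have hb : BddAbove (Set.range fun m => ⨆ _ : m ∈ s, f m) := by
      refine ⟨f m₀, ?_⟩
      rintro x ⟨m, rfl⟩
      exact Real.iSup_le (fun hm => hmax m hm) (hf m₀)
    refine le_trans ?_ (le_ciSup hb m₀)
    haveI : Nonempty (m₀ ∈ s) := ⟨hm₀⟩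
    exact (ciSup_const (a := f m₀)).ge

lemma bsup_zero {α : Type*} [Nonempty α] (f : α → ℝ) :
    (⨆ m ∈ (∅ : Finset α), f m) = 0 := by
  have h : ∀ m : α, (⨆ _ : m ∈ (∅ : Finset α), f m) = 0 := fun m => by
    haveI : IsEmpty (m ∈ (∅ : Finset α) : Prop) := ⟨fun h => Finset.notMem_empty m h⟩
    exact Real.iSup_of_isEmpty _
  simp only [h, ciSup_const]

variable {k : Type*} [Field k] {n : ℕ}

/-- evaluation of the Gauss sup at a nonzero element -/
lemma emb_eval (w : Fin n → ℝ) (c : AddMonoidAlgebra k (Fin n → ℤ)) (hc : c ≠ 0) :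
    ∃ m₀ ∈ c.coeff.support, (⨆ m ∈ c.coeff.support, Real.exp (-(Wf w m))) = Real.exp (-(Wf w m₀)) ∧
      ∀ m ∈ c.coeff.support, Wf w m₀ ≤ Wf w m := by
  obtain ⟨m₀, hm₀, hmin⟩ := Finset.exists_min_image c.coeff.support (Wf w)
    (Finsupp.support_nonempty_iff.2 (by simpa using hc))
  exact ⟨m₀, hm₀, bsup_eq (fun _ => (Real.exp_pos _).le) hm₀
    (fun m hm => Real.exp_le_exp.2 (neg_le_neg (hmin m hm))), hmin⟩

lemma emb_mul (w : Fin n → ℝ) (x y : AddMonoidAlgebra k (Fin n → ℤ)) (hx : x ≠ 0) (hy : y ≠ 0) :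
    (⨆ m ∈ (x * y).coeff.support, Real.exp (-(Wf w m))) =
    (⨆ m ∈ x.coeff.support, Real.exp (-(Wf w m))) * (⨆ m ∈ y.coeff.support, Real.exp (-(Wf w m))) := by
  haveI : WellFoundedLT (Fin n) := inferInstance
  haveI : IsOrderedCancelAddMonoid (ℝ ×ₗ Lex (Fin n → ℤ)) := inferInstance
  set D : (Fin n → ℤ) → ℝ ×ₗ Lex (Fin n → ℤ) := fun m => toLex (-(Wf w m), toLex m) with hDdef
  have hDinj : Function.Injective D := by
    intro a b h
    have h2 := congrArg (fun p => ofLex ((ofLex p).2)) h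
    exact h2
  have hDadd : ∀ a b, D (a + b) = D a + D b := by
    intro a b
    show toLex (-(Wf w (a+b)), toLex (a+b)) = toLex ((-(Wf w a), toLex a) + (-(Wf w b), toLex b))
    rw [Prod.mk_add_mk, Wf_add, neg_add]
    rfl
  have hDW : ∀ a b : Fin n → ℤ, D a ≤ D b → Wf w b ≤ Wf w a := by
    intro a b h
    rcases Prod.Lex.le_iff.1 h with h1 | ⟨h1, -⟩
    · simpa [hDdef] using h1.le
    · simp only [hDdef, ofLex_toLex] at h1; linarith [h1]
  obtain ⟨mx, hmx, hmaxx⟩ := Finset.exists_max_image x.coeff.support D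
    (Finsupp.support_nonempty_iff.2 (by simpa using hx))
  obtain ⟨my, hmy, hmaxy⟩ := Finset.exists_max_image y.coeff.support D
    (Finsupp.support_nonempty_iff.2 (by simpa using hy))
  have hcoeff : (x * y).coeff (mx + my) = x.coeff mx * y.coeff my := by
    rw [AddMonoidAlgebra.coeff_mul]
    rw [Finsupp.sum]
    rw [Finset.sum_eq_single_of_mem mx hmx]
    · rw [Finsupp.sum, Finset.sum_eq_single_of_mem my hmy]
      · rw [if_pos rfl]
      · intro b hb hne
        rw [if_neg]
        exact fun h => hne (add_left_cancel h)
    · intro a ha hne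
      rw [Finsupp.sum]
      apply Finset.sum_eq_zero
      intro b hb
      rw [if_neg]
      intro h
      have h1 : D a < D mx := lt_of_le_of_ne (hmaxx a ha) (fun he => hne (hDinj he))
      have h2 : D b ≤ D my := hmaxy b hb
      have h3 : D a + D b < D mx + D my := add_lt_add_of_lt_of_le h1 h2
      rw [← hDadd, ← hDadd, h] at h3
      exact lt_irrefl _ h3
  have hne0 : (x * y).coeff (mx + my) ≠ 0 := by
    rw [hcoeff]
    exact mul_ne_zero (Finsupp.mem_support_iff.1 hmx) (Finsupp.mem_support_iff.1 hmy)
  have hmem : mx + my ∈ (x * y).coeff.support := Finsupp.mem_support_iff.2 hne0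
  have hWx : ∀ m ∈ x.coeff.support, Wf w mx ≤ Wf w m := fun m hm => hDW m mx (hmaxx m hm)
  have hWy : ∀ m ∈ y.coeff.support, Wf w my ≤ Wf w m := fun m hm => hDW m my (hmaxy m hm)
  have hWxy : ∀ m ∈ (x * y).coeff.support, Wf w (mx + my) ≤ Wf w m := by
    intro m hm
    have := AddMonoidAlgebra.support_coeff_mul_subset x y hm
    rw [Finset.mem_add] at this
    obtain ⟨a, ha, b, hb, rfl⟩ := this
    rw [Wf_add, Wf_add]
    exact add_le_add (hWx a ha) (hWy b hb)
  rw [bsup_eq (fun _ => (Real.exp_pos _).le) hmem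
      (fun m hm => Real.exp_le_exp.2 (neg_le_neg (hWxy m hm))),
    bsup_eq (fun _ => (Real.exp_pos _).le) hmx
      (fun m hm => Real.exp_le_exp.2 (neg_le_neg (hWx m hm))),
    bsup_eq (fun _ => (Real.exp_pos _).le) hmy
      (fun m hm => Real.exp_le_exp.2 (neg_le_neg (hWy m hm))),
    Wf_add, neg_add, Real.exp_add]

end Stmt8Aux

lemma Stmt8Aux.cont_sup' {X α : Type*} [TopologicalSpace X] (s : Finset α) (hs : s.Nonempty)
    (g : α → X → ℝ) (hg : ∀ a, Continuous (g a)) :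
    Continuous fun x => s.sup' hs fun a => g a x := by
  induction hs using Finset.Nonempty.cons_induction with
  | singleton a => simpa using hg a
  | cons a s ha hs ih =>
    simp only [Finset.sup'_cons hs]
    exact (hg a).max ih

/-- over a trivially valued field `k`, for each linear functional
`w ∈ N_ℝ ≅ ℝⁿ` the Gauss formula `|Σ c_m χ^m| = max_{m ∈ supp c} e^{-⟨m,w⟩}` defines a
multiplicative seminorm on `k[M]` (`M = ℤⁿ`) bounded by the trivial norm on `k`; the
resulting map `emb : N_ℝ → T^an` is continuous (into the topology of pointwise
convergence) and is a section of tropicalization: `trop ∘ emb = id`, i.e.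
`-log |χ^m|_{emb w} = ⟨m, w⟩`. -/
theorem stmt_8 {k : Type*} [Field k] (n : ℕ)
    (emb : (Fin n → ℝ) → AddMonoidAlgebra k (Fin n → ℤ) → ℝ)
    (hemb : ∀ w c, emb w c = ⨆ m ∈ c.coeff.support, Real.exp (-(∑ i, (m i : ℝ) * w i))) :
    (∀ w, IsMultSeminorm (emb w)) ∧
    (∀ w (c : k), emb w (algebraMap k (AddMonoidAlgebra k (Fin n → ℤ)) c) =
      if c = 0 then 0 else 1) ∧
    Continuous emb ∧
    (∀ w (m : Fin n → ℤ),
      -Real.log (emb w (AddMonoidAlgebra.single m 1)) = ∑ i, (m i : ℝ) * w i) := by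
  have hzero : ∀ w, emb w (0 : AddMonoidAlgebra k (Fin n → ℤ)) = 0 := by
    intro w
    rw [hemb]
    rw [show (0 : AddMonoidAlgebra k (Fin n → ℤ)).coeff.support = ∅ from Finsupp.support_zero]
    exact Stmt8Aux.bsup_zero _
  have hnn : ∀ w c, 0 ≤ emb w c := by
    intro w c
    rw [hemb]
    exact Real.iSup_nonneg fun m => Real.iSup_nonneg fun _ => (Real.exp_pos _).le
  have hval : ∀ w (c : AddMonoidAlgebra k (Fin n → ℤ)), c ≠ 0 →
      ∃ m₀ ∈ c.coeff.support, emb w c = Real.exp (-(Stmt8Aux.Wf w m₀)) ∧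
        ∀ m ∈ c.coeff.support, Stmt8Aux.Wf w m₀ ≤ Stmt8Aux.Wf w m := by
    intro w c hc
    rw [hemb]
    exact Stmt8Aux.emb_eval w c hc
  have hle : ∀ w (c : AddMonoidAlgebra k (Fin n → ℤ)) m, m ∈ c.coeff.support →
      Real.exp (-(Stmt8Aux.Wf w m)) ≤ emb w c := by
    intro w c m hm
    have hc : c ≠ 0 := fun h => by simp [h] at hm
    obtain ⟨m₀, hm₀, hv, hmin⟩ := hval w c hc
    rw [hv]
    exact Real.exp_le_exp.2 (neg_le_neg (hmin m hm))
  have hsingle : ∀ w (m : Fin n → ℤ) (c : k), c ≠ 0 →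
      emb w (AddMonoidAlgebra.single m c) = Real.exp (-(Stmt8Aux.Wf w m)) := by
    intro w m c hc
    rw [hemb]
    rw [show (AddMonoidAlgebra.single m c).coeff.support = {m} from
      Finsupp.support_single_ne_zero m hc]
    exact Stmt8Aux.bsup_eq (fun _ => (Real.exp_pos _).le) (Finset.mem_singleton_self m)
      (fun a ha => by rw [Finset.mem_singleton.1 ha])
  refine ⟨?_, ?_, ?_, ?_⟩
  · intro w
    refine ⟨hzero w, ?_, ?_, ?_, hnn w⟩
    · rw [AddMonoidAlgebra.one_def, hsingle w 0 1 one_ne_zero, Stmt8Aux.Wf_zero,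
        neg_zero, Real.exp_zero]
    · intro x y
      rcases eq_or_ne x 0 with rfl | hx
      · rw [zero_mul, hzero w, zero_mul]
      rcases eq_or_ne y 0 with rfl | hy
      · rw [mul_zero, hzero w, mul_zero]
      rw [hemb, hemb, hemb]
      exact Stmt8Aux.emb_mul w x y hx hy
    · intro x y
      by_cases hxy : x + y = 0
      · rw [hxy, hzero w]
        exact add_nonneg (hnn w x) (hnn w y)
      · obtain ⟨m₀, hm₀, hv, -⟩ := hval w (x + y) hxy
        rw [hv]
        rcases Finset.mem_union.1 (Finset.mem_of_subset Finsupp.support_add hm₀) with h | h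
        · exact le_add_of_le_of_nonneg (hle w x m₀ h) (hnn w y)
        · exact le_add_of_nonneg_of_le (hnn w x) (hle w y m₀ h)
  · intro w c
    rcases eq_or_ne c 0 with rfl | hc
    · rw [if_pos rfl, map_zero, hzero w]
    · rw [if_neg hc]
      have : algebraMap k (AddMonoidAlgebra k (Fin n → ℤ)) c =
          AddMonoidAlgebra.single 0 c := by
        rw [AddMonoidAlgebra.coe_algebraMap]; simp
      rw [this, hsingle w 0 c hc, Stmt8Aux.Wf_zero, neg_zero, Real.exp_zero]
  · apply continuous_pi
    intro c
    by_cases hc : c = 0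
    · have heq : (fun w => emb w c) = fun _ => (0 : ℝ) :=
        funext fun w => by rw [hc, hzero w]
      rw [heq]; exact continuous_const
    · have hs : c.coeff.support.Nonempty := Finsupp.support_nonempty_iff.2 (by simpa using hc)
      have heq : (fun w => emb w c) =
          fun w => c.coeff.support.sup' hs fun m => Real.exp (-(Stmt8Aux.Wf w m)) := by
        funext w
        obtain ⟨m₀, hm₀, hv, hmin⟩ := hval w c hc
        rw [hv]
        refine le_antisymm (Finset.le_sup' (fun m => Real.exp (-(Stmt8Aux.Wf w m))) hm₀)
          (Finset.sup'_le _ _ fun m hm => Real.exp_le_exp.2 (neg_le_neg (hmin m hm)))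
      rw [heq]
      refine Stmt8Aux.cont_sup' _ hs _ fun m => ?_
      exact Real.continuous_exp.comp
        ((continuous_finset_sum _ fun i _ => continuous_const.mul (continuous_apply i)).neg)
  · intro w m
    rw [hsingle w m 1 one_ne_zero, Real.log_exp, neg_neg]
    rfl
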